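/- Let T₁, …, Tₙ be the commuting 3×3 matrices Tⱼ = [[0, αⱼ, 0], [0, 0, βⱼ], [0, 0, 0]] satisfying αⱼβₖ = αₖβⱼ for all j, k, with |αⱼ|, |βⱼ| ≤ 1. Then for every polynomial p in n variables with sup norm at most 1 on the polydisc 𝔻ⁿ, ‖p(T₁, …, Tₙ)‖ ≤ 1. -/

import Mathlib

/-- Evaluation of a polynomial in `n` variables on an `n`-tuple of (commuting) elements of a
possibly noncommutative `ℂ`-algebra. -/
noncomputable def opEval {n : ℕ} {R : Type*} [Ring R] [Algebra ℂ R]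
    (T : Fin n → R) (p : MvPolynomial (Fin n) ℂ) : R :=
  ∑ k ∈ p.support, p.coeff k • (List.ofFn fun i => T i ^ k i).prod

open Polynomial

lemma norm_aeval_unitary_le {A : Type*} [CStarAlgebra A] [Nontrivial A]
    (u : A) (hu : u ∈ unitary A) (q : ℂ[X])
    (hq : ∀ x : ℂ, ‖x‖ ≤ 1 → ‖q.eval x‖ ≤ 1) :
    ‖aeval u q‖ ≤ 1 := by
  have hc : Commute (star u) u := by
    rw [Unitary.mem_iff] at hu
    exact hu.1.trans hu.2.symm
  haveI hnormal : IsStarNormal (aeval u q) := by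
    constructor
    rw [aeval_eq_sum_range (p := q) u, star_sum]
    refine Commute.sum_left _ _ _ fun i _ => ?_
    refine Commute.sum_right _ _ _ fun j _ => ?_
    rw [star_smul, star_pow]
    exact ((hc.pow_pow i j).smul_left _).smul_right _
  have hrad : spectralRadius ℂ (aeval u q) ≤ 1 := by
    rw [spectralRadius]
    refine iSup₂_le fun k hk => ?_
    rw [spectrum.map_polynomial_aeval_of_nonempty u q (spectrum.nonempty u)] at hk
    obtain ⟨z, hz, rfl⟩ := hk
    have hz1 : ‖z‖ = 1 := by
      simpa [Metric.mem_sphere, dist_zero_right] using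
        spectrum.subset_circle_of_unitary hu hz
    have := hq z hz1.le
    simp only [ENNReal.coe_le_one_iff, ← NNReal.coe_le_coe, coe_nnnorm]
    exact_mod_cast this
  rw [IsStarNormal.spectralRadius_eq_nnnorm (aeval u q)] at hrad
  exact_mod_cast hrad
open Polynomial ContinuousLinearMap

variable {E : Type*} [NormedAddCommGroup E] [InnerProductSpace ℂ E]

/-- Egerváry-type block dilation linear map. -/
noncomputable def dilU [CompleteSpace E] (N Dt D' : E →L[ℂ] E) (d : ℕ) :
    (PiLp 2 fun _ : Fin (d+2) => E) →ₗ[ℂ] (PiLp 2 fun _ : Fin (d+2) => E) where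
  toFun v := WithLp.toLp 2 fun k => Fin.cases
      (N (v 0) + D' (v (Fin.last (d+1))))
      (fun j => Fin.cases
        (Dt (v 0) - (ContinuousLinearMap.adjoint N) (v (Fin.last (d+1))))
        (fun i => v i.succ.castSucc) j) k
  map_add' v w := by
    ext k
    induction k using Fin.cases with
    | zero => simp [PiLp.add_apply]; abel
    | succ j =>
      simp only [PiLp.add_apply, Fin.cases_succ]
      induction j using Fin.cases with
      | zero => simp [PiLp.add_apply]; abel
      | succ i => simp [PiLp.add_apply]
  map_smul' c v := by
    ext k
    induction k using Fin.cases with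
    | zero => simp [PiLp.smul_apply, smul_add]
    | succ j =>
      simp only [PiLp.smul_apply, Fin.cases_succ]
      induction j using Fin.cases with
      | zero => simp [PiLp.smul_apply, smul_sub]
      | succ i => simp [PiLp.smul_apply]

section
variable [CompleteSpace E] (N Dt D' : E →L[ℂ] E) (d : ℕ)

lemma dilU_apply (v : PiLp 2 fun _ : Fin (d+2) => E) (k : Fin (d+2)) :
    dilU N Dt D' d v k = Fin.cases
      (N (v 0) + D' (v (Fin.last (d+1))))
      (fun j => Fin.cases
        (Dt (v 0) - (ContinuousLinearMap.adjoint N) (v (Fin.last (d+1))))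
        (fun i => v i.succ.castSucc) j) k := rfl

lemma dilU_apply_zero (v : PiLp 2 fun _ : Fin (d+2) => E) :
    dilU N Dt D' d v 0 = N (v 0) + D' (v (Fin.last (d+1))) := rfl

lemma dilU_apply_one (v : PiLp 2 fun _ : Fin (d+2) => E) :
    dilU N Dt D' d v 1 = Dt (v 0) - (ContinuousLinearMap.adjoint N) (v (Fin.last (d+1))) := by
  have h1 : (1 : Fin (d+2)) = (0 : Fin (d+1)).succ := by simp [Fin.ext_iff]
  rw [dilU_apply, h1, Fin.cases_succ, Fin.cases_zero]

lemma dilU_apply_succ_succ (v : PiLp 2 fun _ : Fin (d+2) => E) (i : Fin d) :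
    dilU N Dt D' d v i.succ.succ = v i.succ.castSucc := by
  rw [dilU_apply, Fin.cases_succ, Fin.cases_succ]
end

open scoped InnerProductSpace

lemma inner_clm_aux [CompleteSpace E] (A B : E →L[ℂ] E) (x y : E) :
    ⟪A x, B y⟫_ℂ = ⟪((ContinuousLinearMap.adjoint B) * A) x, y⟫_ℂ := by
  rw [ContinuousLinearMap.mul_apply, ContinuousLinearMap.adjoint_inner_left]

lemma dilU_inner [CompleteSpace E] (N Dt D' : E →L[ℂ] E)
    (hDt : ContinuousLinearMap.adjoint Dt = Dt) (hD' : ContinuousLinearMap.adjoint D' = D')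
    (h1 : ContinuousLinearMap.adjoint N * N + Dt * Dt = 1)
    (h2 : N * ContinuousLinearMap.adjoint N + D' * D' = 1)
    (h5 : D' * N = N * Dt) (d : ℕ) (v w : PiLp 2 fun _ : Fin (d+2) => E) :
    ⟪dilU N Dt D' d v, dilU N Dt D' d w⟫_ℂ = ⟪v, w⟫_ℂ := by
  have h5adj : ContinuousLinearMap.adjoint N * D' = Dt * ContinuousLinearMap.adjoint N := by
    have h := congrArg ContinuousLinearMap.adjoint h5
    rw [ContinuousLinearMap.mul_def, ContinuousLinearMap.mul_def,
      ContinuousLinearMap.adjoint_comp, ContinuousLinearMap.adjoint_comp, hD', hDt] at h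
    rw [← ContinuousLinearMap.mul_def, ← ContinuousLinearMap.mul_def] at h
    exact h
  rw [PiLp.inner_apply, PiLp.inner_apply]
  rw [Fin.sum_univ_succ (f := fun k => ⟪dilU N Dt D' d v k, dilU N Dt D' d w k⟫_ℂ)]
  rw [Fin.sum_univ_succ (f := fun j : Fin (d+1) => ⟪dilU N Dt D' d v j.succ, dilU N Dt D' d w j.succ⟫_ℂ)]
  rw [Fin.sum_univ_castSucc (f := fun k : Fin (d+2) => ⟪v k, w k⟫_ℂ)]
  rw [Fin.sum_univ_succ (f := fun i : Fin (d+1) => ⟪v i.castSucc, w i.castSucc⟫_ℂ)]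
  simp only [Fin.succ_zero_eq_one, Fin.castSucc_zero, dilU_apply_zero, dilU_apply_one,
    dilU_apply_succ_succ]
  have key : ⟪N (v 0) + D' (v (Fin.last (d+1))), N (w 0) + D' (w (Fin.last (d+1)))⟫_ℂ
      + ⟪Dt (v 0) - (ContinuousLinearMap.adjoint N) (v (Fin.last (d+1))),
          Dt (w 0) - (ContinuousLinearMap.adjoint N) (w (Fin.last (d+1)))⟫_ℂ
      = ⟪v 0, w 0⟫_ℂ + ⟪v (Fin.last (d+1)), w (Fin.last (d+1))⟫_ℂ := by
    simp only [inner_add_left, inner_add_right, inner_sub_left, inner_sub_right]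
    rw [inner_clm_aux N N, inner_clm_aux N D', inner_clm_aux D' N, inner_clm_aux D' D',
      inner_clm_aux Dt Dt, inner_clm_aux Dt (ContinuousLinearMap.adjoint N),
      inner_clm_aux (ContinuousLinearMap.adjoint N) Dt,
      inner_clm_aux (ContinuousLinearMap.adjoint N) (ContinuousLinearMap.adjoint N)]
    rw [hDt, hD', ContinuousLinearMap.adjoint_adjoint, h5, h5adj]
    have m1 : ⟪((ContinuousLinearMap.adjoint N * N) (v 0)), w 0⟫_ℂ
        + ⟪(Dt * Dt) (v 0), w 0⟫_ℂ = ⟪v 0, w 0⟫_ℂ := by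
      rw [← inner_add_left, ← ContinuousLinearMap.add_apply, h1, ContinuousLinearMap.one_apply]
    have m2 : ⟪(D' * D') (v (Fin.last (d+1))), w (Fin.last (d+1))⟫_ℂ
        + ⟪(N * ContinuousLinearMap.adjoint N) (v (Fin.last (d+1))), w (Fin.last (d+1))⟫_ℂ
        = ⟪v (Fin.last (d+1)), w (Fin.last (d+1))⟫_ℂ := by
      rw [← inner_add_left, ← ContinuousLinearMap.add_apply, add_comm (D' * D'), h2,
        ContinuousLinearMap.one_apply]
    linear_combination m1 + m2
  linear_combination key

lemma dilation_norm_aeval_le [FiniteDimensional ℂ E] [Nontrivial E]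
    (N Dt D' : E →L[ℂ] E)
    (hDt : ContinuousLinearMap.adjoint Dt = Dt) (hD' : ContinuousLinearMap.adjoint D' = D')
    (h1 : ContinuousLinearMap.adjoint N * N + Dt * Dt = 1)
    (h2 : N * ContinuousLinearMap.adjoint N + D' * D' = 1)
    (h5 : D' * N = N * Dt)
    (q : ℂ[X]) (hq : ∀ x : ℂ, ‖x‖ ≤ 1 → ‖q.eval x‖ ≤ 1) :
    ‖aeval N q‖ ≤ 1 := by
  classical
  set d := q.natDegree with hd
  let W := PiLp 2 fun _ : Fin (d+2) => E
  let U : W →L[ℂ] W := LinearMap.toContinuousLinearMap (dilU N Dt D' d)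
  have hUapp : ∀ v : W, U v = dilU N Dt D' d v := fun v => rfl
  have hinner : ∀ v w : W, ⟪U v, U w⟫_ℂ = ⟪v, w⟫_ℂ := fun v w =>
    dilU_inner N Dt D' hDt hD' h1 h2 h5 d v w
  have hstar : star U * U = 1 := by
    refine ContinuousLinearMap.ext fun v => ?_
    refine ext_inner_right ℂ fun w => ?_
    rw [ContinuousLinearMap.mul_apply, ContinuousLinearMap.star_eq_adjoint,
      ContinuousLinearMap.adjoint_inner_left, hinner, ContinuousLinearMap.one_apply]
  have hinj : Function.Injective U := by
    intro x y hxy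
    have hx : (star U * U) x = (star U * U) y := by
      simp only [ContinuousLinearMap.mul_apply, hxy]
    simpa [hstar] using hx
  have hsurj : Function.Surjective U :=
    LinearMap.injective_iff_surjective.mp hinj
  have hmul2 : U * star U = 1 := by
    refine ContinuousLinearMap.ext fun y => ?_
    obtain ⟨x, rfl⟩ := hsurj y
    have : (U * star U) (U x) = U ((star U * U) x) := rfl
    rw [this, hstar, ContinuousLinearMap.one_apply, ContinuousLinearMap.one_apply]
  have hu : U ∈ unitary (W →L[ℂ] W) := Unitary.mem_iff.mpr ⟨hstar, hmul2⟩
  have hUq : ‖aeval U q‖ ≤ 1 := norm_aeval_unitary_le U hu q hq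
  -- embedding of E into W
  let ι : E → W := fun x => WithLp.toLp 2 fun k => if k = 0 then x else 0
  refine (aeval N q).opNorm_le_bound zero_le_one fun x => ?_
  have inv : ∀ k : ℕ, k ≤ d + 1 →
      ((U ^ k) (ι x)) 0 = (N ^ k) x ∧
      ∀ j : Fin (d+2), k < (j : ℕ) → ((U ^ k) (ι x)) j = 0 := by
    intro k
    induction k with
    | zero =>
      intro _
      constructor
      · simp only [pow_zero, ContinuousLinearMap.one_apply]
        simp [ι]
      · intro j hj
        simp only [pow_zero, ContinuousLinearMap.one_apply]
        have hj0 : j ≠ 0 := by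
          intro h0
          rw [h0] at hj
          simp at hj
        simp [ι, hj0]
    | succ k IH =>
      intro hk
      have IHk := IH (by omega)
      have hwl : ((U ^ k) (ι x)) (Fin.last (d+1)) = 0 := by
        refine IHk.2 _ ?_
        simp only [Fin.val_last]
        omega
      have happ : (U ^ (k+1)) (ι x) = U ((U ^ k) (ι x)) := by
        rw [pow_succ', ContinuousLinearMap.mul_apply]
      constructor
      · rw [happ, hUapp, dilU_apply_zero, IHk.1, hwl, map_zero, add_zero]
        rw [pow_succ', ContinuousLinearMap.mul_apply]
      · intro j hj
        rw [happ, hUapp]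
        induction j using Fin.cases with
        | zero => simp at hj
        | succ j' =>
          induction j' using Fin.cases with
          | zero => simp at hj
          | succ i =>
            rw [dilU_apply_succ_succ]
            refine IHk.2 _ ?_
            have : ((i.succ.succ : Fin (d+2)) : ℕ) = (i : ℕ) + 2 := by simp
            have h2' : ((i.succ.castSucc : Fin (d+2)) : ℕ) = (i : ℕ) + 1 := by simp
            omega
  have hπ : ((aeval U q) (ι x)) 0 = (aeval N q) x := by
    rw [aeval_eq_sum_range' (n := d + 2) (by omega) U,
      aeval_eq_sum_range' (n := d + 2) (by omega) N]
    rw [ContinuousLinearMap.sum_apply, ContinuousLinearMap.sum_apply]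
    have hms := map_sum (PiLp.proj (𝕜 := ℂ) 2 (fun _ : Fin (d+2) => E) 0)
      (fun i => (q.coeff i • U ^ i) (ι x)) (Finset.range (d+2))
    have hproj : ∀ y : W, PiLp.proj (𝕜 := ℂ) 2 (fun _ : Fin (d+2) => E) 0 y = y 0 :=
      fun _ => rfl
    calc (∑ i ∈ Finset.range (d+2), (q.coeff i • U ^ i) (ι x)) 0
        = ∑ i ∈ Finset.range (d+2),
            PiLp.proj (𝕜 := ℂ) 2 (fun _ : Fin (d+2) => E) 0 ((q.coeff i • U ^ i) (ι x)) := hms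
      _ = ∑ i ∈ Finset.range (d+2), (q.coeff i • N ^ i) x := by
          refine Finset.sum_congr rfl fun i hi => ?_
          rw [hproj, ContinuousLinearMap.smul_apply, ContinuousLinearMap.smul_apply,
            PiLp.smul_apply, (inv i (by simp only [Finset.mem_range] at hi; omega)).1]
  have hcomp : ∀ y : W, ‖y 0‖ ≤ ‖y‖ := by
    intro y
    have h2' := PiLp.norm_sq_eq_of_L2 (fun _ : Fin (d+2) => E) y
    have h3' : ‖y 0‖ ^ 2 ≤ ∑ i : Fin (d+2), ‖y i‖ ^ 2 :=
      Finset.single_le_sum (f := fun i => ‖y i‖ ^ 2)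
        (fun i _ => sq_nonneg _) (Finset.mem_univ 0)
    nlinarith [norm_nonneg (y 0), norm_nonneg y]
  have hιx : ‖ι x‖ ≤ ‖x‖ := by
    have h2' := PiLp.norm_sq_eq_of_L2 (fun _ : Fin (d+2) => E) (ι x)
    have h3' : ∑ i : Fin (d+2), ‖(ι x) i‖ ^ 2 = ‖x‖ ^ 2 := by
      rw [Finset.sum_eq_single 0]
      · simp [ι]
      · intro b _ hb; simp [ι, hb]
      · intro h; exact absurd (Finset.mem_univ 0) h
    nlinarith [norm_nonneg (ι x), norm_nonneg x]
  calc ‖(aeval N q) x‖ = ‖((aeval U q) (ι x)) 0‖ := by rw [hπ]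
    _ ≤ ‖(aeval U q) (ι x)‖ := hcomp _
    _ ≤ ‖aeval U q‖ * ‖ι x‖ := (aeval U q).le_opNorm _
    _ ≤ 1 * ‖x‖ := mul_le_mul hUq hιx (norm_nonneg _) zero_le_one

lemma key3 (a b : ℂ) (ha : ‖a‖ ≤ 1) (hb : ‖b‖ ≤ 1) (q : ℂ[X])
    (hq : ∀ x : ℂ, ‖x‖ ≤ 1 → ‖q.eval x‖ ≤ 1) :
    ‖aeval (Matrix.toEuclideanCLM (𝕜 := ℂ)
      (!![0, a, 0; 0, 0, b; 0, 0, 0] : Matrix (Fin 3) (Fin 3) ℂ)) q‖ ≤ 1 := by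
  set s : ℝ := Real.sqrt (1 - ‖a‖ ^ 2) with hs
  set t : ℝ := Real.sqrt (1 - ‖b‖ ^ 2) with ht
  have hs2 : (s : ℂ) * (s : ℂ) = 1 - (starRingEnd ℂ) a * a := by
    have h1' : s * s = 1 - ‖a‖ ^ 2 := Real.mul_self_sqrt (by nlinarith [norm_nonneg a])
    have haa : (starRingEnd ℂ) a * a = ((‖a‖ ^ 2 : ℝ) : ℂ) := by
      rw [mul_comm, Complex.mul_conj]
      norm_cast
      rw [Complex.normSq_eq_norm_sq]
    calc (s:ℂ) * (s:ℂ) = ((s*s : ℝ) : ℂ) := by push_cast; ring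
      _ = ((1 - ‖a‖^2 : ℝ) : ℂ) := by rw [h1']
      _ = 1 - (starRingEnd ℂ) a * a := by rw [haa]; push_cast; ring
  have ht2 : (t : ℂ) * (t : ℂ) = 1 - (starRingEnd ℂ) b * b := by
    have h1' : t * t = 1 - ‖b‖ ^ 2 := Real.mul_self_sqrt (by nlinarith [norm_nonneg b])
    have hbb : (starRingEnd ℂ) b * b = ((‖b‖ ^ 2 : ℝ) : ℂ) := by
      rw [mul_comm, Complex.mul_conj]
      norm_cast
      rw [Complex.normSq_eq_norm_sq]
    calc (t:ℂ) * (t:ℂ) = ((t*t : ℝ) : ℂ) := by push_cast; ring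
      _ = ((1 - ‖b‖^2 : ℝ) : ℂ) := by rw [h1']
      _ = 1 - (starRingEnd ℂ) b * b := by rw [hbb]; push_cast; ring
  set M : Matrix (Fin 3) (Fin 3) ℂ := !![0, a, 0; 0, 0, b; 0, 0, 0] with hM
  set DtM : Matrix (Fin 3) (Fin 3) ℂ := Matrix.diagonal ![1, (s:ℂ), (t:ℂ)] with hDtM
  set D'M : Matrix (Fin 3) (Fin 3) ℂ := Matrix.diagonal ![(s:ℂ), (t:ℂ), 1] with hD'M
  have hDtH : DtM.conjTranspose = DtM := by
    ext i j
    fin_cases i <;> fin_cases j <;> simp [hDtM, Matrix.diagonal]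
  have hD'H : D'M.conjTranspose = D'M := by
    ext i j
    fin_cases i <;> fin_cases j <;> simp [hD'M, Matrix.diagonal]
  have h1m : M.conjTranspose * M + DtM * DtM = 1 := by
    ext i j
    fin_cases i <;> fin_cases j <;>
      simp [hM, hDtM, Matrix.mul_apply, Fin.sum_univ_three, Matrix.one_apply,
        Matrix.diagonal, Matrix.vecHead, Matrix.vecTail, Function.comp] <;>
      first
        | rfl
        | linear_combination hs2
        | linear_combination ht2
  have hMH : M.conjTranspose =
      !![0, 0, 0; (starRingEnd ℂ) a, 0, 0; 0, (starRingEnd ℂ) b, 0] := by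
    ext i j
    fin_cases i <;> fin_cases j <;>
      simp [hM, Matrix.conjTranspose_apply, Matrix.vecHead, Matrix.vecTail, Function.comp] <;>
      rfl
  have h2m : M * M.conjTranspose + D'M * D'M = 1 := by
    rw [hMH]
    ext i j
    fin_cases i <;> fin_cases j <;>
      simp [hM, hD'M, Matrix.mul_apply, Fin.sum_univ_three, Matrix.one_apply,
        Matrix.diagonal, Matrix.vecHead, Matrix.vecTail, Function.comp] <;>
      first
        | rfl
        | linear_combination hs2
        | linear_combination ht2
  have h5m : D'M * M = M * DtM := by
    ext i j
    fin_cases i <;> fin_cases j <;>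
      simp [hM, hD'M, hDtM, Matrix.mul_apply, Fin.sum_univ_three,
        Matrix.diagonal, Matrix.vecHead, Matrix.vecTail, Function.comp] <;>
      ring
  -- move to continuous linear maps
  set φ := Matrix.toEuclideanCLM (𝕜 := ℂ) (n := Fin 3)
  have hadj : ∀ A : Matrix (Fin 3) (Fin 3) ℂ,
      ContinuousLinearMap.adjoint (φ A) = φ A.conjTranspose := by
    intro A
    rw [← ContinuousLinearMap.star_eq_adjoint, ← map_star φ A, Matrix.star_eq_conjTranspose]
  refine dilation_norm_aeval_le (φ M) (φ DtM) (φ D'M) ?_ ?_ ?_ ?_ ?_ q hq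
  · rw [hadj, hDtH]
  · rw [hadj, hD'H]
  · rw [hadj, ← map_mul, ← map_mul, ← map_add, h1m, map_one]
  · rw [hadj, ← map_mul, ← map_mul, ← map_add, h2m, map_one]
  · rw [← map_mul, ← map_mul, h5m]
lemma opEval_eq {n : ℕ} {R : Type*} [Ring R] [Algebra ℂ R] (N : R) (γ : Fin n → ℂ)
    (T : Fin n → R) (hT : ∀ i, T i = γ i • N) (p : MvPolynomial (Fin n) ℂ) :
    opEval T p
      = Polynomial.aeval N (MvPolynomial.aeval (fun i => Polynomial.C (γ i) * Polynomial.X) p) := by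
  classical
  have hlist : ∀ k : Fin n →₀ ℕ, (List.ofFn fun i => T i ^ k i).prod
      = Polynomial.aeval N (∏ i, (Polynomial.C (γ i) * Polynomial.X) ^ k i) := by
    intro k
    have hfun : (fun i => T i ^ k i)
        = fun i => Polynomial.aeval N ((Polynomial.C (γ i) * Polynomial.X) ^ k i) := by
      funext i
      rw [hT i, map_pow, map_mul, Polynomial.aeval_C, Polynomial.aeval_X, Algebra.smul_def]
    have hmap : (List.ofFn fun i => Polynomial.aeval N ((Polynomial.C (γ i) * Polynomial.X) ^ k i))
        = (List.ofFn fun i => ((Polynomial.C (γ i) * Polynomial.X) ^ k i)).map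
            (Polynomial.aeval N) := by
      rw [List.map_ofFn]
      rfl
    rw [hfun, hmap, ← map_list_prod (Polynomial.aeval N), List.prod_ofFn]
  rw [opEval]
  conv_rhs => rw [MvPolynomial.as_sum p]
  rw [map_sum, map_sum]
  refine Finset.sum_congr rfl fun k _ => ?_
  rw [hlist k, MvPolynomial.aeval_monomial]
  have hfp : (k.prod fun i e => (Polynomial.C (γ i) * Polynomial.X) ^ e)
      = ∏ i, (Polynomial.C (γ i) * Polynomial.X) ^ k i :=
    Finsupp.prod_fintype _ _ fun i => pow_zero _
  rw [hfp, map_mul, AlgHom.commutes, ← Algebra.smul_def]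

lemma eval_subst {n : ℕ} (γ : Fin n → ℂ) (p : MvPolynomial (Fin n) ℂ) (x : ℂ) :
    (MvPolynomial.aeval (fun i => Polynomial.C (γ i) * Polynomial.X) p).eval x
      = MvPolynomial.eval (fun i => γ i * x) p := by
  induction p using MvPolynomial.induction_on with
  | C c => simp
  | add p q hp hq => simp [hp, hq]
  | mul_X p i hp => simp [hp]

/-- von-Neumann inequality for commuting `n`-tuples of `3×3` strictly upper-triangular
matrices `Tⱼ = [[0, αⱼ, 0], [0, 0, βⱼ], [0, 0, 0]]` with `αⱼβₖ = αₖβⱼ` and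
`|αⱼ|, |βⱼ| ≤ 1`. -/
theorem stmt12 (n : ℕ) (α β : Fin n → ℂ)
    (hcomm : ∀ j k, α j * β k = α k * β j)
    (hα : ∀ j, ‖α j‖ ≤ 1) (hβ : ∀ j, ‖β j‖ ≤ 1)
    (T : Fin n → Matrix (Fin 3) (Fin 3) ℂ)
    (hT : ∀ j, T j = !![0, α j, 0; 0, 0, β j; 0, 0, 0])
    (p : MvPolynomial (Fin n) ℂ)
    (hp : ∀ z : Fin n → ℂ, (∀ i, ‖z i‖ ≤ 1) → ‖MvPolynomial.eval z p‖ ≤ 1) :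
    ‖Matrix.toEuclideanCLM (𝕜 := ℂ) (opEval T p)‖ ≤ 1 := by
  classical
  obtain ⟨A, B, γ, hA, hB, hγ, hα', hβ'⟩ :
      ∃ (A B : ℂ) (γ : Fin n → ℂ), ‖A‖ ≤ 1 ∧ ‖B‖ ≤ 1 ∧ (∀ j, ‖γ j‖ ≤ 1) ∧
        (∀ j, α j = A * γ j) ∧ (∀ j, β j = B * γ j) := by
    by_cases hall : ∀ j, α j = 0
    · exact ⟨0, 1, β, by simp, by simp, hβ, fun j => by simp [hall j], fun j => by simp⟩
    · push_neg at hall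
      obtain ⟨j₁, hj₁⟩ := hall
      obtain ⟨j₀, -, hj₀⟩ := Finset.exists_max_image Finset.univ (fun j => ‖α j‖)
        ⟨j₁, Finset.mem_univ _⟩
      have hα0 : α j₀ ≠ 0 := by
        intro h0
        apply hj₁
        have h1 := hj₀ j₁ (Finset.mem_univ _)
        rw [h0, norm_zero] at h1
        exact norm_le_zero_iff.mp h1
      refine ⟨α j₀, β j₀, fun j => α j / α j₀, hα j₀, hβ j₀, ?_, ?_, ?_⟩
      · intro j
        rw [norm_div]
        exact div_le_one_of_le₀ (hj₀ j (Finset.mem_univ _)) (norm_nonneg _)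
      · intro j
        field_simp
      · intro j
        field_simp
        linear_combination hcomm j₀ j
  set N : Matrix (Fin 3) (Fin 3) ℂ := !![0, A, 0; 0, 0, B; 0, 0, 0] with hN
  have hTN : ∀ j, T j = γ j • N := by
    intro j
    rw [hT j, hα' j, hβ' j, hN]
    ext i l
    fin_cases i <;> fin_cases l <;>
      simp [Matrix.smul_apply, Matrix.vecHead, Matrix.vecTail, Function.comp, mul_comm]
  set q : Polynomial ℂ :=
    MvPolynomial.aeval (fun i => Polynomial.C (γ i) * Polynomial.X) p with hqdef
  have hq : ∀ x : ℂ, ‖x‖ ≤ 1 → ‖q.eval x‖ ≤ 1 := by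
    intro x hx
    rw [hqdef, eval_subst γ p x]
    refine hp _ fun i => ?_
    rw [norm_mul]
    calc ‖γ i‖ * ‖x‖ ≤ 1 * 1 := by
          exact mul_le_mul (hγ i) hx (norm_nonneg _) zero_le_one
      _ = 1 := one_mul _
  rw [opEval_eq N γ T hTN p, ← hqdef]
  have hcomm' : Matrix.toEuclideanCLM (𝕜 := ℂ) (Polynomial.aeval N q)
      = Polynomial.aeval (Matrix.toEuclideanCLM (𝕜 := ℂ) N) q :=
    (Polynomial.aeval_algHom_apply (Matrix.toEuclideanCLM (𝕜 := ℂ)) N q).symm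
  rw [hcomm', hN]
  exact key3 A B hA hB q hq
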